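/- Let d ≥ 1 be an integer, L > 0, μ > 0, ε′ ≥ 0, σ ≥ 0, K ≥ 0, K′ ≥ 0, Δ ≥ 0. Let f : ℝ^d → ℝ be L-smooth, bounded above with f* = sup f, and satisfy the (μ, ε′)-relaxed weak gradient domination condition. Define η_t = 2/(t+2) and γ_t = 6/(√(2μ)·(t+2)) for integers t ≥ 0. On a probability space, let (θ_t)_{t≥0}, (d_t)_{t≥0}, (g_t)_{t≥0} be square-integrable ℝ^d-valued random sequences such that, almost surely for all t ≥ 0: d_t ≠ 0, θ_{t+1} = θ_t + γ_t·d_t/‖d_t‖, and ‖g_t − ∇f(θ_t)‖ ≤ Δ. Assume the sequence V_t := E[‖d_t − g_t‖²] satisfies V_0 ≤ σ² and V_{t+1} ≤ (1 − η_{t+1})·V_t + 2σ²·η_{t+1}² + K·γ_t² + K′ for all t ≥ 0. Then there exists an absolute constant C > 0 (independent of all the above data) such that for every integer T ≥ 1: f* − E[f(θ_T)] ≤ (f* − E[f(θ_0)])/(T+1)² + C·( (σ/√μ + L/μ)/(T+1) + (σ/√μ + √K/μ)/(T+1)^{1/2} + (ε′ + Δ)/√μ + √(K′)·(T+1)^{1/2}/√μ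 ). -/

import Mathlib

open MeasureTheory

/-- The momentum parameter sequence `η_t = 2/(t+2)` of the N-HARPG analysis. -/
noncomputable def etaNH (t : ℕ) : ℝ := 2 / ((t : ℝ) + 2)

/-- The step-size sequence `γ_t = 6/(√(2μ)(t+2))` of the N-HARPG analysis. -/
noncomputable def gammaNH (μ : ℝ) (t : ℕ) : ℝ := 6 / (Real.sqrt (2 * μ) * ((t : ℝ) + 2))


open MeasureTheory InnerProductSpace
open scoped ENNReal NNReal

section AuxNHARPG

variable {E : Type*} [NormedAddCommGroup E] [InnerProductSpace ℝ E] [CompleteSpace E]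

local notation "⟪" x ", " y "⟫" => @inner ℝ _ _ x y

lemma line_hasDerivAt (f : E → ℝ) (hf : Differentiable ℝ f) (x v : E) (s : ℝ) :
    HasDerivAt (fun s : ℝ => f (x + s • v)) ⟪gradient f (x + s • v), v⟫ s := by
  have h1 : HasFDerivAt f (toDual ℝ E (gradient f (x + s • v))) (x + s • v) :=
    (hf _).hasGradientAt.hasFDerivAt
  have h2 : HasDerivAt (fun s : ℝ => x + s • v) v s := by
    simpa using ((hasDerivAt_id s).smul_const v).const_add x
  simpa [toDual_apply_apply, Function.comp_def] using h1.comp_hasDerivAt s h2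

lemma smooth_lower {L : ℝ} (hL0 : 0 ≤ L) (f : E → ℝ) (hf : Differentiable ℝ f)
    (hLip : ∀ x y, ‖gradient f x - gradient f y‖ ≤ L * ‖x - y‖) (x y : E) :
    f x + ⟪gradient f x, y - x⟫ - L * ‖y - x‖ ^ 2 ≤ f y := by
  set v := y - x with hv
  obtain ⟨c, hc, hderiv⟩ := exists_hasDerivAt_eq_slope (fun s : ℝ => f (x + s • v))
    (fun s => ⟪gradient f (x + s • v), v⟫) one_pos
    (by
      exact (hf.comp ((differentiable_id.smul_const v).const_add x)).continuous.continuousOn)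
    (fun s _ => line_hasDerivAt f hf x v s)
  have hy : x + (1:ℝ) • v = y := by simp [hv]
  have hx0 : x + (0:ℝ) • v = x := by simp
  rw [hx0, hy] at hderiv
  simp only [div_one, sub_zero] at hderiv
  have key : f y - f x = ⟪gradient f (x + c • v), v⟫ := hderiv.symm
  have hsplit : ⟪gradient f (x + c • v), v⟫
      = ⟪gradient f x, v⟫ + ⟪gradient f (x + c • v) - gradient f x, v⟫ := by
    rw [inner_sub_left]; ring
  have hbound : ‖⟪gradient f (x + c • v) - gradient f x, v⟫‖ ≤ L * ‖v‖ ^ 2 := by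
    calc ‖⟪gradient f (x + c • v) - gradient f x, v⟫‖
        ≤ ‖gradient f (x + c • v) - gradient f x‖ * ‖v‖ := norm_inner_le_norm _ _
      _ ≤ (L * ‖(x + c • v) - x‖) * ‖v‖ := by
          gcongr; exact hLip _ _
      _ ≤ L * ‖v‖ ^ 2 := by
          have : ‖(x + c • v) - x‖ = |c| * ‖v‖ := by simp [norm_smul]
          rw [this, abs_of_pos hc.1]
          nlinarith [norm_nonneg v, hc.1.le, hc.2.le, mul_nonneg hL0 (mul_nonneg (norm_nonneg v) (norm_nonneg v)), mul_nonneg (mul_nonneg hL0 (norm_nonneg v)) (norm_nonneg v)]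
  have := neg_abs_le ⟪gradient f (x + c • v) - gradient f x, v⟫
  have habs : |⟪gradient f (x + c • v) - gradient f x, v⟫| ≤ L * ‖v‖ ^ 2 := by
    simpa [Real.norm_eq_abs] using hbound
  nlinarith [abs_le.mp habs]

lemma inner_norm_dir (x d : E) (hd : d ≠ 0) (γ : ℝ) (hγ : 0 ≤ γ) :
    γ * (‖x‖ - 2 * ‖d - x‖) ≤ ⟪x, (γ / ‖d‖) • d⟫ := by
  have hdn : (0:ℝ) < ‖d‖ := norm_pos_iff.mpr hd
  rw [real_inner_smul_right]
  have h1 : ⟪x, d⟫ = ⟪d, d⟫ - ⟪d - x, d⟫ := by rw [inner_sub_left]; ring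
  have h2 : ⟪d - x, d⟫ ≤ ‖d - x‖ * ‖d‖ := real_inner_le_norm _ _
  have h3 : ⟪d, d⟫ = ‖d‖ ^ 2 := real_inner_self_eq_norm_sq d
  have h4 : ‖d‖ ^ 2 - ‖d - x‖ * ‖d‖ = (‖d‖ - ‖d - x‖) * ‖d‖ := by ring
  have h5 : ‖x‖ - 2 * ‖d - x‖ ≤ ‖d‖ - ‖d - x‖ := by
    have := norm_sub_norm_le d x
    have h6 : ‖x‖ ≤ ‖d‖ + ‖d - x‖ := by
      calc ‖x‖ = ‖d - (d - x)‖ := by congr 1; abel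
        _ ≤ ‖d‖ + ‖d - x‖ := norm_sub_le _ _
    linarith
  calc γ * (‖x‖ - 2 * ‖d - x‖) = (‖x‖ - 2 * ‖d - x‖) * ‖d‖ * (γ / ‖d‖) := by
        field_simp
    _ ≤ ⟪x, d⟫ * (γ / ‖d‖) := by
        have hg : 0 ≤ γ / ‖d‖ := div_nonneg hγ hdn.le
        have : (‖x‖ - 2 * ‖d - x‖) * ‖d‖ ≤ ⟪x, d⟫ := by
          rw [h1, h3]; nlinarith
        exact mul_le_mul_of_nonneg_right this hg
    _ = γ / ‖d‖ * ⟪x, d⟫ := by ring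

lemma pointwise_step {L μ ε' Δ : ℝ} (hL : 0 < L) (hμ : 0 < μ) (hε' : 0 ≤ ε') (hΔ : 0 ≤ Δ)
    (f : E → ℝ) (hf : Differentiable ℝ f)
    (hLip : ∀ x y, ‖gradient f x - gradient f y‖ ≤ L * ‖x - y‖)
    (fstar : ℝ)
    (hdom : ∀ x, ε' + ‖gradient f x‖ ≥ Real.sqrt (2 * μ) * (fstar - f x))
    (t : ℕ) (θv dv gv : E) (hdv : dv ≠ 0)
    (hgΔ : ‖gv - gradient f θv‖ ≤ Δ) :
    fstar - f (θv + (gammaNH μ t / ‖dv‖) • dv) ≤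
      (1 - 6 / ((t:ℝ) + 2)) * (fstar - f θv)
        + gammaNH μ t * (ε' + 2 * Δ) + 2 * gammaNH μ t * ‖dv - gv‖
        + L * gammaNH μ t ^ 2 := by
  set γ := gammaNH μ t with hγdef
  have ht2 : (0:ℝ) < (t:ℝ) + 2 := by positivity
  have hsμ : (0:ℝ) < Real.sqrt (2 * μ) := Real.sqrt_pos.mpr (by linarith)
  have hγpos : 0 < γ := by
    rw [hγdef]; unfold gammaNH; positivity
  have hγμ : Real.sqrt (2 * μ) * γ = 6 / ((t:ℝ) + 2) := by
    rw [hγdef]; unfold gammaNH; field_simp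
  set θ' := θv + (γ / ‖dv‖) • dv with hθ'
  -- step length
  have hstep : ‖θ' - θv‖ = γ := by
    rw [hθ']
    have : θv + (γ / ‖dv‖) • dv - θv = (γ / ‖dv‖) • dv := by abel
    rw [this, norm_smul]
    have hdn : (0:ℝ) < ‖dv‖ := norm_pos_iff.mpr hdv
    rw [Real.norm_eq_abs, abs_of_pos (div_pos hγpos hdn)]
    field_simp
  -- smoothness descent
  have hdesc : f θv + ⟪gradient f θv, θ' - θv⟫ - L * γ ^ 2 ≤ f θ' := by
    have := smooth_lower hL.le f hf hLip θv θ'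
    rwa [hstep] at this
  -- inner product bound
  have hinner : γ * (‖gradient f θv‖ - 2 * ‖dv - gradient f θv‖) ≤ ⟪gradient f θv, θ' - θv⟫ := by
    have : θ' - θv = (γ / ‖dv‖) • dv := by rw [hθ']; abel
    rw [this]
    exact inner_norm_dir _ _ hdv _ hγpos.le
  -- error split
  have herr : ‖dv - gradient f θv‖ ≤ ‖dv - gv‖ + Δ := by
    calc ‖dv - gradient f θv‖ = ‖(dv - gv) + (gv - gradient f θv)‖ := by congr 1; abel
      _ ≤ ‖dv - gv‖ + ‖gv - gradient f θv‖ := norm_add_le _ _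
      _ ≤ ‖dv - gv‖ + Δ := by linarith
  -- gradient domination
  have hgd : Real.sqrt (2 * μ) * (fstar - f θv) - ε' ≤ ‖gradient f θv‖ := by
    have := hdom θv; linarith
  have h1 : γ * (Real.sqrt (2 * μ) * (fstar - f θv) - ε' - 2 * (‖dv - gv‖ + Δ))
      ≤ ⟪gradient f θv, θ' - θv⟫ := by
    refine le_trans ?_ hinner
    apply mul_le_mul_of_nonneg_left _ hγpos.le
    have h0 : 0 ≤ ‖dv - gradient f θv‖ := norm_nonneg _
    linarith
  have h2 : γ * (Real.sqrt (2 * μ) * (fstar - f θv)) = (6 / ((t:ℝ) + 2)) * (fstar - f θv) := by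
    rw [← hγμ]; ring
  nlinarith [hdesc, h1, h2]

lemma sqrt_add_le (a b : ℝ) (ha : 0 ≤ a) (hb : 0 ≤ b) :
    Real.sqrt (a + b) ≤ Real.sqrt a + Real.sqrt b := by
  have h : a + b ≤ (Real.sqrt a + Real.sqrt b) ^ 2 := by
    have := Real.sq_sqrt ha
    have := Real.sq_sqrt hb
    nlinarith [Real.sqrt_nonneg a, Real.sqrt_nonneg b]
  calc Real.sqrt (a + b) ≤ Real.sqrt ((Real.sqrt a + Real.sqrt b) ^ 2) := Real.sqrt_le_sqrt h
    _ = Real.sqrt a + Real.sqrt b := Real.sqrt_sq (by positivity)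

lemma Vrec_arith (x σ2 Kμ K' : ℝ) (hx : 0 ≤ x) (hσ : 0 ≤ σ2) (hK : 0 ≤ Kμ) (hK' : 0 ≤ K') :
    (1 - 2/(x+3)) * ((8*σ2+27*Kμ)/(x+2) + K'*(x+2)/2) + 8*σ2/(x+3)^2 + 18*Kμ/(x+2)^2 + K'
      ≤ (8*σ2+27*Kμ)/(x+3) + K'*(x+3)/2 := by
  have h2 : (0:ℝ) < x+2 := by linarith
  have h3 : (0:ℝ) < x+3 := by linarith
  rw [div_add_div _ _ (ne_of_gt h2) (by norm_num : (2:ℝ) ≠ 0)]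
  rw [div_add_div _ _ (ne_of_gt h3) (by norm_num : (2:ℝ) ≠ 0)]
  have e1 : 1 - 2/(x+3) = (x+1)/(x+3) := by field_simp; ring
  rw [e1]
  rw [div_mul_div_comm, div_add_div _ _ (by positivity : ((x+3)*((x+2)*2)) ≠ 0) (by positivity : ((x+3)^2) ≠ 0),
    div_add_div _ _ (by positivity : ((x+3)*((x+2)*2)*(x+3)^2) ≠ 0) (by positivity : ((x+2)^2) ≠ 0),
    div_add' _ _ _ (by positivity : ((x+3)*((x+2)*2)*(x+3)^2*(x+2)^2) ≠ 0)]
  rw [div_le_div_iff₀ (by positivity) (by positivity)]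
  ring_nf
  nlinarith [mul_nonneg (pow_nonneg hx 0) hσ, mul_nonneg (pow_nonneg hx 0) hK, mul_nonneg (pow_nonneg hx 0) hK', mul_nonneg (pow_nonneg hx 1) hσ, mul_nonneg (pow_nonneg hx 1) hK, mul_nonneg (pow_nonneg hx 1) hK', mul_nonneg (pow_nonneg hx 2) hσ, mul_nonneg (pow_nonneg hx 2) hK, mul_nonneg (pow_nonneg hx 2) hK', mul_nonneg (pow_nonneg hx 3) hσ, mul_nonneg (pow_nonneg hx 3) hK, mul_nonneg (pow_nonneg hx 3) hK', mul_nonneg (pow_nonneg hx 4) hσ, mul_nonneg (pow_nonneg hx 4) hK, mul_nonneg (pow_nonneg hx 4) hK', mul_nonneg (pow_nonneg hx 5) hσ, mul_nonneg (pow_nonneg hx 5) hK, mul_nonneg (pow_nonneg hx 5) hK', mul_nonneg (pow_nonneg hx 6) hσ, mul_nonneg (pow_nonneg hx 6) hK, mul_nonneg (pow_nonneg hx 6) hK', mul_nonneg (pow_nonneg hx 7) hσ, mul_nonneg (pow_nonneg hx 7) hK, mul_nonneg (pow_nonneg hx 7) hK', mul_nonneg (pow_nonneg hx 8) hσ, mul_nonneg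 (pow_nonneg hx 8) hK, mul_nonneg (pow_nonneg hx 8) hK']

lemma gammaNH_sq (μ : ℝ) (hμ : 0 < μ) (t : ℕ) :
    gammaNH μ t ^ 2 = 18 / (μ * ((t:ℝ)+2)^2) := by
  unfold gammaNH
  rw [div_pow, mul_pow, Real.sq_sqrt (by linarith : (0:ℝ) ≤ 2*μ)]
  have ht2 : ((t:ℝ)+2) ≠ 0 := by positivity
  field_simp
  ring

lemma V_bound (μ σ K K' : ℝ) (hμ : 0 < μ) (hσ : 0 ≤ σ) (hK : 0 ≤ K) (hK' : 0 ≤ K')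
    (V : ℕ → ℝ) (hVnn : ∀ t, 0 ≤ V t) (hV0 : V 0 ≤ σ^2)
    (hrec : ∀ t, V (t+1) ≤ (1 - etaNH (t+1)) * V t + 2*σ^2*(etaNH (t+1))^2
      + K*(gammaNH μ t)^2 + K') :
    ∀ t, V t ≤ (8*σ^2 + 27*(K/μ))/((t:ℝ)+2) + K'*((t:ℝ)+2)/2 := by
  intro t
  induction t with
  | zero =>
    have hKμ : 0 ≤ K/μ := div_nonneg hK hμ.le
    have : (8*σ^2 + 27*(K/μ))/((0:ℝ)+2) + K'*((0:ℝ)+2)/2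
        = 4*σ^2 + (27/2)*(K/μ) + K' := by ring
    push_cast
    rw [this]
    nlinarith [sq_nonneg σ]
  | succ n ih =>
    have hx : (0:ℝ) ≤ (n:ℝ) := Nat.cast_nonneg n
    have heta : etaNH (n+1) = 2/((n:ℝ)+3) := by
      unfold etaNH; push_cast; ring_nf
    have hcoef : 0 ≤ 1 - etaNH (n+1) := by
      rw [heta]
      have h3 : (0:ℝ) < (n:ℝ)+3 := by linarith
      rw [sub_nonneg, div_le_one h3]; linarith
    have h1 : V (n+1) ≤ (1 - etaNH (n+1)) * ((8*σ^2 + 27*(K/μ))/((n:ℝ)+2) + K'*((n:ℝ)+2)/2)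
        + 2*σ^2*(etaNH (n+1))^2 + K*(gammaNH μ n)^2 + K' := by
      have := hrec n
      have h2 := mul_le_mul_of_nonneg_left ih hcoef
      linarith
    have h3 : K*(gammaNH μ n)^2 = 18*(K/μ)/(((n:ℝ)+2)^2) := by
      rw [gammaNH_sq μ hμ n]
      field_simp
    have h4 : 2*σ^2*(etaNH (n+1))^2 = 8*(σ^2)/(((n:ℝ)+3)^2) := by
      rw [heta]; field_simp; ring
    rw [h3, h4] at h1
    have harith := Vrec_arith (n:ℝ) (σ^2) (K/μ) K' hx (sq_nonneg σ)
      (div_nonneg hK hμ.le) hK'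
    push_cast
    have hcast : ((n:ℝ)+1)+2 = (n:ℝ)+3 := by ring
    rw [hcast]
    calc V (n+1) ≤ _ := h1
      _ ≤ (8*σ^2+27*(K/μ))/((n:ℝ)+3) + K'*((n:ℝ)+3)/2 := by
          have := harith
          rw [heta]
          linarith

lemma sqrtV_bound (μ σ K K' : ℝ) (hμ : 0 < μ) (hσ : 0 ≤ σ) (hK : 0 ≤ K) (hK' : 0 ≤ K')
    (V : ℕ → ℝ) (hVnn : ∀ t, 0 ≤ V t) (hV0 : V 0 ≤ σ^2)
    (hrec : ∀ t, V (t+1) ≤ (1 - etaNH (t+1)) * V t + 2*σ^2*(etaNH (t+1))^2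
      + K*(gammaNH μ t)^2 + K') (t : ℕ) :
    Real.sqrt (V t) ≤ (3*σ + 6*Real.sqrt K/Real.sqrt μ)/Real.sqrt ((t:ℝ)+2)
      + Real.sqrt K' * Real.sqrt ((t:ℝ)+2) := by
  have hx2 : (0:ℝ) < (t:ℝ)+2 := by positivity
  have hKμ : (0:ℝ) ≤ K/μ := div_nonneg hK hμ.le
  have hb := V_bound μ σ K K' hμ hσ hK hK' V hVnn hV0 hrec t
  have h1 : Real.sqrt (V t) ≤ Real.sqrt ((8*σ^2 + 27*(K/μ))/((t:ℝ)+2) + K'*((t:ℝ)+2)/2) :=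
    Real.sqrt_le_sqrt hb
  have h2 : Real.sqrt ((8*σ^2 + 27*(K/μ))/((t:ℝ)+2) + K'*((t:ℝ)+2)/2)
      ≤ Real.sqrt ((8*σ^2 + 27*(K/μ))/((t:ℝ)+2)) + Real.sqrt (K'*((t:ℝ)+2)/2) :=
    sqrt_add_le _ _ (by positivity) (by positivity)
  have h3 : Real.sqrt ((8*σ^2 + 27*(K/μ))/((t:ℝ)+2))
      = Real.sqrt (8*σ^2 + 27*(K/μ)) / Real.sqrt ((t:ℝ)+2) :=
    Real.sqrt_div (by positivity) _
  have h4 : Real.sqrt (8*σ^2 + 27*(K/μ)) ≤ 3*σ + 6*Real.sqrt K/Real.sqrt μ := by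
    have ha : Real.sqrt (8*σ^2 + 27*(K/μ)) ≤ Real.sqrt (8*σ^2) + Real.sqrt (27*(K/μ)) :=
      sqrt_add_le _ _ (by positivity) (by positivity)
    have hb1 : Real.sqrt (8*σ^2) ≤ 3*σ := by
      rw [Real.sqrt_mul (by norm_num) _, Real.sqrt_sq hσ]
      have : Real.sqrt 8 ≤ 3 := by
        rw [show (3:ℝ) = Real.sqrt 9 by rw [show (9:ℝ) = 3^2 by norm_num, Real.sqrt_sq]; norm_num]
        exact Real.sqrt_le_sqrt (by norm_num)
      nlinarith [Real.sqrt_nonneg (8:ℝ)]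
    have hb2 : Real.sqrt (27*(K/μ)) ≤ 6*Real.sqrt K/Real.sqrt μ := by
      rw [Real.sqrt_mul (by norm_num) _, Real.sqrt_div hK μ]
      have h27 : Real.sqrt 27 ≤ 6 := by
        rw [show (6:ℝ) = Real.sqrt 36 by rw [show (36:ℝ) = 6^2 by norm_num, Real.sqrt_sq]; norm_num]
        exact Real.sqrt_le_sqrt (by norm_num)
      have hdnn : 0 ≤ Real.sqrt K / Real.sqrt μ := by positivity
      calc Real.sqrt 27 * (Real.sqrt K / Real.sqrt μ) ≤ 6 * (Real.sqrt K / Real.sqrt μ) :=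
            mul_le_mul_of_nonneg_right h27 hdnn
        _ = 6*Real.sqrt K/Real.sqrt μ := by ring
    linarith
  have h5 : Real.sqrt (K'*((t:ℝ)+2)/2) ≤ Real.sqrt K' * Real.sqrt ((t:ℝ)+2) := by
    rw [← Real.sqrt_mul hK']
    apply Real.sqrt_le_sqrt
    nlinarith [mul_nonneg hK' hx2.le]
  have h6 : Real.sqrt (8*σ^2 + 27*(K/μ)) / Real.sqrt ((t:ℝ)+2)
      ≤ (3*σ + 6*Real.sqrt K/Real.sqrt μ)/Real.sqrt ((t:ℝ)+2) := by
    gcongr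
  linarith [h1, h2, h3 ▸ h2]

lemma weighted_rec (G c : ℕ → ℝ) (hGnn : ∀ t, 0 ≤ G t)
    (hrec : ∀ t, G (t+1) ≤ (1 - 6/((t:ℝ)+2)) * G t + c t) :
    ∀ T : ℕ, ((T:ℝ)+1)^3 * G T ≤ G 0 + ∑ t ∈ Finset.range T, ((t:ℝ)+2)^3 * c t := by
  intro T
  induction T with
  | zero => simp
  | succ n ih =>
    have hx : (0:ℝ) ≤ (n:ℝ) := Nat.cast_nonneg n
    have h2 : (0:ℝ) < (n:ℝ)+2 := by linarith
    have hkey : ((n:ℝ)+2)^3 * (1 - 6/((n:ℝ)+2)) ≤ ((n:ℝ)+1)^3 := by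
      have : ((n:ℝ)+2)^3 * (1 - 6/((n:ℝ)+2)) = ((n:ℝ)+2)^2 * ((n:ℝ)-4) := by
        field_simp; ring
      rw [this]; nlinarith
    have hmul := mul_le_mul_of_nonneg_left (hrec n) (by positivity : (0:ℝ) ≤ ((n:ℝ)+2)^3)
    have hG : ((n:ℝ)+2)^3 * ((1 - 6/((n:ℝ)+2)) * G n) ≤ ((n:ℝ)+1)^3 * G n := by
      rw [← mul_assoc]
      exact mul_le_mul_of_nonneg_right hkey (hGnn n)
    have hcast : (((n+1:ℕ)):ℝ)+1 = (n:ℝ)+2 := by push_cast; ring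
    rw [Finset.sum_range_succ]
    rw [hcast]
    calc ((n:ℝ)+2)^3 * G (n+1) ≤ ((n:ℝ)+2)^3 * ((1 - 6/((n:ℝ)+2)) * G n + c n) := hmul
      _ = ((n:ℝ)+2)^3 * ((1 - 6/((n:ℝ)+2)) * G n) + ((n:ℝ)+2)^3 * c n := by ring
      _ ≤ ((n:ℝ)+1)^3 * G n + ((n:ℝ)+2)^3 * c n := by linarith
      _ ≤ (G 0 + ∑ t ∈ Finset.range n, ((t:ℝ)+2)^3 * c t) + ((n:ℝ)+2)^3 * c n := by linarith
      _ = G 0 + (∑ t ∈ Finset.range n, ((t:ℝ)+2)^3 * c t + ((n:ℝ)+2)^3 * c n) := by ring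

lemma summand_bound (μ L ε' Δ σ K K' : ℝ) (hμ : 0 < μ) (hL : 0 < L) (hε' : 0 ≤ ε')
    (hΔ : 0 ≤ Δ) (hσ : 0 ≤ σ) (hK : 0 ≤ K) (hK' : 0 ≤ K') (t T : ℕ) (ht : t < T)
    (W : ℝ) (hWnn : 0 ≤ W)
    (hW : W ≤ (3*σ + 6*Real.sqrt K/Real.sqrt μ)/Real.sqrt ((t:ℝ)+2)
      + Real.sqrt K' * Real.sqrt ((t:ℝ)+2)) :
    ((t:ℝ)+2)^3 * (gammaNH μ t * (ε'+2*Δ) + 2*gammaNH μ t * W + L * gammaNH μ t^2)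
      ≤ 6*(ε'+2*Δ)*((T:ℝ)+1)^2/Real.sqrt μ
        + 12*(3*σ+6*Real.sqrt K/Real.sqrt μ)*(((T:ℝ)+1)*Real.sqrt ((T:ℝ)+1))/Real.sqrt μ
        + 12*Real.sqrt K'*(((T:ℝ)+1)^2*Real.sqrt ((T:ℝ)+1))/Real.sqrt μ
        + 18*L*((T:ℝ)+1)/μ := by
  have hsμ : (0:ℝ) < Real.sqrt μ := Real.sqrt_pos.mpr hμ
  have hγpos : 0 < gammaNH μ t := by
    unfold gammaNH
    have h2μ : (0:ℝ) < Real.sqrt (2*μ) := Real.sqrt_pos.mpr (by linarith)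
    positivity
  have hγle : gammaNH μ t ≤ 6/(Real.sqrt μ * ((t:ℝ)+2)) := by
    unfold gammaNH
    have hm : Real.sqrt μ ≤ Real.sqrt (2*μ) := Real.sqrt_le_sqrt (by linarith)
    have ht0 : (0:ℝ) ≤ (t:ℝ) := Nat.cast_nonneg t
    have h0 : 0 < Real.sqrt μ * ((t:ℝ)+2) := by positivity
    have h1 : Real.sqrt μ * ((t:ℝ)+2) ≤ Real.sqrt (2*μ) * ((t:ℝ)+2) :=
      mul_le_mul_of_nonneg_right hm (by linarith)
    exact div_le_div_of_nonneg_left (by norm_num) h0 h1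
  have hγsq := gammaNH_sq μ hμ t
  have hxy' : (t:ℝ)+1 ≤ (T:ℝ) := by exact_mod_cast Nat.succ_le_of_lt ht
  have hx : (0:ℝ) ≤ (t:ℝ) := Nat.cast_nonneg t
  revert hγle hγsq hγpos
  generalize gammaNH μ t = g
  revert hxy' hW hx
  generalize (t:ℝ) = x
  generalize (T:ℝ) = y
  intro hW hxy' hx hγpos hγle hγsq
  have hx2 : (0:ℝ) < x+2 := by linarith
  have hxy : x+2 ≤ y+1 := by linarith
  have hy1 : (0:ℝ) < y+1 := lt_of_lt_of_le hx2 hxy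
  have hsKμ : (0:ℝ) ≤ 3*σ + 6*Real.sqrt K/Real.sqrt μ := by positivity
  have hsx : (0:ℝ) < Real.sqrt (x+2) := Real.sqrt_pos.mpr hx2
  have hsy : (0:ℝ) < Real.sqrt (y+1) := Real.sqrt_pos.mpr hy1
  have hsxy : Real.sqrt (x+2) ≤ Real.sqrt (y+1) := Real.sqrt_le_sqrt hxy
  have hdiv : (x+2)/Real.sqrt (x+2) = Real.sqrt (x+2) := Real.div_sqrt
  -- Term 1
  have hT1 : (x+2)^3 * (g * (ε'+2*Δ)) ≤ 6*(ε'+2*Δ)*(y+1)^2/Real.sqrt μ := by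
    have h2 : (x+2)^3 * ((6/(Real.sqrt μ * (x+2))) * (ε'+2*Δ)) = 6*(ε'+2*Δ)*(x+2)^2/Real.sqrt μ := by
      field_simp
    calc (x+2)^3 * (g * (ε'+2*Δ)) ≤ (x+2)^3 * ((6/(Real.sqrt μ * (x+2))) * (ε'+2*Δ)) := by
          gcongr
      _ = 6*(ε'+2*Δ)*(x+2)^2/Real.sqrt μ := h2
      _ ≤ 6*(ε'+2*Δ)*(y+1)^2/Real.sqrt μ := by gcongr <;> linarith
  -- Term 3
  have hT3 : (x+2)^3 * (L * g^2) ≤ 18*L*(y+1)/μ := by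
    rw [hγsq]
    have h1 : (x+2)^3 * (L * (18/(μ*(x+2)^2))) = 18*L*(x+2)/μ := by
      field_simp
    rw [h1]
    gcongr
  -- Term 2
  have hT2 : (x+2)^3 * (2*g * W)
      ≤ 12*(3*σ+6*Real.sqrt K/Real.sqrt μ)*((y+1)*Real.sqrt (y+1))/Real.sqrt μ
        + 12*Real.sqrt K'*((y+1)^2*Real.sqrt (y+1))/Real.sqrt μ := by
    have h2 : (x+2)^3 * (2*(6/(Real.sqrt μ * (x+2))) * W) = 12*(x+2)^2*W/Real.sqrt μ := by
      field_simp; ring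
    have h4 : (x+2)^2/Real.sqrt (x+2) = (x+2)*Real.sqrt (x+2) := by
      rw [show (x+2)^2 = (x+2)*(x+2) by ring, mul_div_assoc, hdiv]
    have h5 : 12*(x+2)^2*((3*σ+6*Real.sqrt K/Real.sqrt μ)/Real.sqrt (x+2)
          + Real.sqrt K' * Real.sqrt (x+2))/Real.sqrt μ
        = 12*(3*σ+6*Real.sqrt K/Real.sqrt μ)*((x+2)*Real.sqrt (x+2))/Real.sqrt μ
          + 12*Real.sqrt K'*((x+2)^2*Real.sqrt (x+2))/Real.sqrt μ := by
      rw [← h4]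
      field_simp
    have h6 : (x+2)*Real.sqrt (x+2) ≤ (y+1)*Real.sqrt (y+1) :=
      mul_le_mul hxy hsxy hsx.le (by linarith)
    have h7 : (x+2)^2*Real.sqrt (x+2) ≤ (y+1)^2*Real.sqrt (y+1) :=
      mul_le_mul (by nlinarith) hsxy hsx.le (by positivity)
    calc (x+2)^3 * (2*g * W) ≤ (x+2)^3 * (2*(6/(Real.sqrt μ * (x+2))) * W) := by
          gcongr
      _ = 12*(x+2)^2*W/Real.sqrt μ := h2
      _ ≤ 12*(x+2)^2*((3*σ+6*Real.sqrt K/Real.sqrt μ)/Real.sqrt (x+2)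
            + Real.sqrt K' * Real.sqrt (x+2))/Real.sqrt μ := by gcongr
      _ = _ := h5
      _ ≤ 12*(3*σ+6*Real.sqrt K/Real.sqrt μ)*((y+1)*Real.sqrt (y+1))/Real.sqrt μ
          + 12*Real.sqrt K'*((y+1)^2*Real.sqrt (y+1))/Real.sqrt μ := by
        have ha : 12*(3*σ+6*Real.sqrt K/Real.sqrt μ)*((x+2)*Real.sqrt (x+2))/Real.sqrt μ
            ≤ 12*(3*σ+6*Real.sqrt K/Real.sqrt μ)*((y+1)*Real.sqrt (y+1))/Real.sqrt μ := by
          gcongr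
        have hb : 12*Real.sqrt K'*((x+2)^2*Real.sqrt (x+2))/Real.sqrt μ
            ≤ 12*Real.sqrt K'*((y+1)^2*Real.sqrt (y+1))/Real.sqrt μ := by
          gcongr
        linarith
  calc (x+2)^3 * (g * (ε'+2*Δ) + 2*g * W + L * g^2)
      = (x+2)^3 * (g * (ε'+2*Δ)) + (x+2)^3 * (2*g * W)
        + (x+2)^3 * (L * g^2) := by ring
    _ ≤ _ := by linarith

lemma integrable_f_comp {L : ℝ} (hL : 0 < L) (f : E → ℝ) (hf : Differentiable ℝ f)
    (hLip : ∀ x y, ‖gradient f x - gradient f y‖ ≤ L * ‖x - y‖)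
    (fstar : ℝ) (hlub : IsLUB (Set.range f) fstar)
    {Ω : Type} [MeasurableSpace Ω] (P : Measure Ω) [IsProbabilityMeasure P]
    (θ : Ω → E) (hθ : MemLp θ 2 P) :
    Integrable (fun ω => f (θ ω)) P := by
  have hmeas : AEStronglyMeasurable (fun ω => f (θ ω)) P :=
    hf.continuous.comp_aestronglyMeasurable hθ.aestronglyMeasurable
  have hnorm1 : Integrable (fun ω => ‖θ ω‖) P :=
    (hθ.norm.mono_exponent (by norm_num : (1:ℝ≥0∞) ≤ 2)).integrable le_rfl
  have hnorm2 : Integrable (fun ω => ‖θ ω‖^2) P := hθ.norm.integrable_sq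
  have hupper : ∀ z : E, f z ≤ fstar := fun z => hlub.1 (Set.mem_range_self z)
  have hbound : ∀ z : E, |f z| ≤ |fstar| + |f 0| + ‖gradient f 0‖ * ‖z‖ + L * ‖z‖^2 := by
    intro z
    have hup : f z ≤ fstar := hupper z
    have hlow := smooth_lower hL.le f hf hLip 0 z
    simp only [sub_zero] at hlow
    have hip : -(‖gradient f 0‖ * ‖z‖) ≤ ⟪gradient f 0, z⟫ := by
      have := abs_real_inner_le_norm (gradient f 0) z
      cases abs_le.mp this with
      | intro h1 h2 => linarith
    rw [abs_le]
    constructor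
    · have h1 : -|f 0| ≤ f 0 := neg_abs_le _
      nlinarith [norm_nonneg z, norm_nonneg (gradient f 0), abs_nonneg fstar]
    · have : fstar ≤ |fstar| := le_abs_self _
      nlinarith [norm_nonneg z, norm_nonneg (gradient f 0), abs_nonneg (f 0),
        mul_nonneg hL.le (sq_nonneg ‖z‖), mul_nonneg (norm_nonneg (gradient f 0)) (norm_nonneg z)]
  apply Integrable.mono' (g := fun ω => |fstar| + |f 0| + ‖gradient f 0‖ * ‖θ ω‖ + L * ‖θ ω‖^2)
  · exact ((integrable_const _).add (hnorm1.const_mul _)).add (hnorm2.const_mul _)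
  · exact hmeas
  · filter_upwards with ω
    simpa [Real.norm_eq_abs] using hbound (θ ω)

lemma expectation_le_sqrt {Ω : Type} [MeasurableSpace Ω] (P : Measure Ω)
    [IsProbabilityMeasure P] (X : Ω → ℝ) (hX : MemLp X 2 P) (hXnn : ∀ ω, 0 ≤ X ω) :
    ∫ ω, X ω ∂P ≤ Real.sqrt (∫ ω, (X ω)^2 ∂P) := by
  have hvar := ProbabilityTheory.variance_nonneg X P
  rw [ProbabilityTheory.variance_eq_sub hX] at hvar
  have hsq : (∫ ω, X ω ∂P)^2 ≤ ∫ ω, (X ω)^2 ∂P := by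
    have : (∫ ω, (X ^ 2) ω ∂P) = ∫ ω, (X ω)^2 ∂P := by
      apply integral_congr_ae; filter_upwards with ω; simp
    rw [this] at hvar
    linarith
  have hint_nn : 0 ≤ ∫ ω, X ω ∂P := integral_nonneg hXnn
  calc ∫ ω, X ω ∂P = Real.sqrt ((∫ ω, X ω ∂P)^2) := (Real.sqrt_sq hint_nn).symm
    _ ≤ Real.sqrt (∫ ω, (X ω)^2 ∂P) := Real.sqrt_le_sqrt hsq

lemma final_arith (L ε' Δ σ G0 p q r s : ℝ) (hL : 0 < L) (hε' : 0 ≤ ε') (hΔ : 0 ≤ Δ)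
    (hσ : 0 ≤ σ) (hG0 : 0 ≤ G0) (hp : 0 < p) (hq : 0 ≤ q) (hr : 0 ≤ r) (hs : 1 ≤ s) :
    G0/(s*s)^3 + (6*(ε'+2*Δ)*(s*s)^2/p + 12*(3*σ+6*q/p)*((s*s)*s)/p
        + 12*r*((s*s)^2*s)/p + 18*L*(s*s)/(p*p))/(s*s)^2
      ≤ G0/(s*s)^2 + 100*((σ/p + L/(p*p))/(s*s) + (σ/p + q/(p*p))/s
        + (ε'+Δ)/p + r*s/p) := by
  have hs0 : (0:ℝ) < s := lt_of_lt_of_le one_pos hs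
  have hss : (0:ℝ) < s*s := by positivity
  have expand : (6*(ε'+2*Δ)*(s*s)^2/p + 12*(3*σ+6*q/p)*((s*s)*s)/p
        + 12*r*((s*s)^2*s)/p + 18*L*(s*s)/(p*p))/(s*s)^2
      = 6*(ε'+2*Δ)/p + 36*σ/(p*s) + 72*q/(p*p*s) + 12*r*s/p + 18*L/(p*p*(s*s)) := by
    field_simp
    ring
  have expand2 : 100*((σ/p + L/(p*p))/(s*s) + (σ/p + q/(p*p))/s + (ε'+Δ)/p + r*s/p)
      = 100*σ/(p*(s*s)) + 100*L/(p*p*(s*s)) + 100*σ/(p*s) + 100*q/(p*p*s)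
        + 100*(ε'+Δ)/p + 100*r*s/p := by
    field_simp
    ring
  rw [expand, expand2]
  have t1 : G0/(s*s)^3 ≤ G0/(s*s)^2 := by
    apply div_le_div_of_nonneg_left hG0 (by positivity)
    have h1 : 1 ≤ s*s := by nlinarith
    nlinarith [mul_le_mul_of_nonneg_right h1 (sq_nonneg (s*s))]
  have t2 : 6*(ε'+2*Δ)/p ≤ 100*(ε'+Δ)/p := by gcongr ?_/p; linarith
  have t3 : 36*σ/(p*s) ≤ 100*σ/(p*s) := by gcongr ?_/(p*s); linarith
  have t4 : 72*q/(p*p*s) ≤ 100*q/(p*p*s) := by gcongr ?_/(p*p*s); linarith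
  have t5 : 12*r*s/p ≤ 100*r*s/p := by gcongr ?_/p; nlinarith
  have t6 : 18*L/(p*p*(s*s)) ≤ 100*L/(p*p*(s*s)) := by gcongr ?_/(p*p*(s*s)); linarith
  have t7 : 0 ≤ 100*σ/(p*(s*s)) := by positivity
  linarith


end AuxNHARPG

/-- global convergence of N-HARPG, abstract form. There is an absolute
constant `C > 0` such that: for any `L`-smooth `f` bounded above with supremum `fstar`
satisfying the `(μ, ε')`-relaxed weak gradient domination condition, and any square-integrable
random sequences `θ_t, d_t, g_t` following the normalized update
`θ_{t+1} = θ_t + γ_t d_t/‖d_t‖` with surrogate bias `‖g_t - ∇f(θ_t)‖ ≤ Δ` a.s., whose error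
variance `V_t = E‖d_t - g_t‖²` satisfies `V_0 ≤ σ²` and
`V_{t+1} ≤ (1 - η_{t+1}) V_t + 2σ² η_{t+1}² + K γ_t² + K'`, one has for every `T ≥ 1`,
`fstar - E f(θ_T) ≤ (fstar - E f(θ_0))/(T+1)²
  + C ((σ/√μ + L/μ)/(T+1) + (σ/√μ + √K/μ)/(T+1)^{1/2} + (ε' + Δ)/√μ + √K' (T+1)^{1/2}/√μ)`. -/
theorem stmt_16 :
    ∃ C > (0 : ℝ),
      ∀ (d : ℕ), 1 ≤ d →
      ∀ (L μ ε' σ K K' Δ : ℝ),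
        0 < L → 0 < μ → 0 ≤ ε' → 0 ≤ σ → 0 ≤ K → 0 ≤ K' → 0 ≤ Δ →
      ∀ (f : EuclideanSpace ℝ (Fin d) → ℝ),
        Differentiable ℝ f →
        (∀ x y, ‖gradient f x - gradient f y‖ ≤ L * ‖x - y‖) →
      ∀ (fstar : ℝ), IsLUB (Set.range f) fstar →
        (∀ x, ε' + ‖gradient f x‖ ≥ Real.sqrt (2 * μ) * (fstar - f x)) →
      ∀ (Ω : Type) [MeasurableSpace Ω] (P : Measure Ω) [IsProbabilityMeasure P]
        (θ dd g : ℕ → Ω → EuclideanSpace ℝ (Fin d)),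
        (∀ t, MemLp (θ t) 2 P) →
        (∀ t, MemLp (dd t) 2 P) →
        (∀ t, MemLp (g t) 2 P) →
        (∀ t : ℕ, ∀ᵐ ω ∂P, dd t ω ≠ 0 ∧
          θ (t + 1) ω = θ t ω + (gammaNH μ t / ‖dd t ω‖) • dd t ω ∧
          ‖g t ω - gradient f (θ t ω)‖ ≤ Δ) →
        (∫ ω, ‖dd 0 ω - g 0 ω‖ ^ 2 ∂P ≤ σ ^ 2) →
        (∀ t : ℕ, ∫ ω, ‖dd (t + 1) ω - g (t + 1) ω‖ ^ 2 ∂P ≤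
          (1 - etaNH (t + 1)) * ∫ ω, ‖dd t ω - g t ω‖ ^ 2 ∂P
            + 2 * σ ^ 2 * (etaNH (t + 1)) ^ 2 + K * (gammaNH μ t) ^ 2 + K') →
        ∀ T : ℕ, 1 ≤ T →
          fstar - ∫ ω, f (θ T ω) ∂P ≤
            (fstar - ∫ ω, f (θ 0 ω) ∂P) / ((T : ℝ) + 1) ^ 2
              + C * ((σ / Real.sqrt μ + L / μ) / ((T : ℝ) + 1)
                + (σ / Real.sqrt μ + Real.sqrt K / μ) / ((T : ℝ) + 1) ^ ((1 : ℝ) / 2)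
                + (ε' + Δ) / Real.sqrt μ
                + Real.sqrt K' * ((T : ℝ) + 1) ^ ((1 : ℝ) / 2) / Real.sqrt μ) := by
  refine ⟨100, by norm_num, ?_⟩
  intro d hd L μ ε' σ K K' Δ hL hμ hε' hσ hK hK' hΔ f hf hLip fstar hlub hdom
    Ω mΩ P hP θ dd g hθ hdd hg hstep hV0 hVrec T hT
  -- basic objects
  have hXmem : ∀ t, MemLp (fun ω => ‖dd t ω - g t ω‖) 2 P :=
    fun t => ((hdd t).sub (hg t)).norm
  have hXint : ∀ t, Integrable (fun ω => ‖dd t ω - g t ω‖) P :=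
    fun t => (hXmem t).integrable (by norm_num)
  have hVnn : ∀ t, (0:ℝ) ≤ ∫ ω, ‖dd t ω - g t ω‖ ^ 2 ∂P :=
    fun t => integral_nonneg fun ω => by positivity
  have hWle : ∀ t, ∫ ω, ‖dd t ω - g t ω‖ ∂P ≤ Real.sqrt (∫ ω, ‖dd t ω - g t ω‖ ^ 2 ∂P) :=
    fun t => expectation_le_sqrt P _ (hXmem t) (fun ω => norm_nonneg _)
  have hsqrtV : ∀ t, Real.sqrt (∫ ω, ‖dd t ω - g t ω‖ ^ 2 ∂P)
      ≤ (3*σ + 6*Real.sqrt K/Real.sqrt μ)/Real.sqrt ((t:ℝ)+2)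
        + Real.sqrt K' * Real.sqrt ((t:ℝ)+2) :=
    sqrtV_bound μ σ K K' hμ hσ hK hK' _ hVnn hV0 hVrec
  have hfint : ∀ t, Integrable (fun ω => f (θ t ω)) P :=
    fun t => integrable_f_comp hL f hf hLip fstar hlub P (θ t) (hθ t)
  have hfub : ∀ t, ∫ ω, f (θ t ω) ∂P ≤ fstar := by
    intro t
    have h1 : ∫ ω, f (θ t ω) ∂P ≤ ∫ _ω, fstar ∂P :=
      integral_mono (hfint t) (integrable_const _) (fun ω => hlub.1 (Set.mem_range_self _))
    simpa using h1
  set G : ℕ → ℝ := fun t => fstar - ∫ ω, f (θ t ω) ∂P with hGdef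
  have hGnn : ∀ t, 0 ≤ G t := fun t => sub_nonneg.mpr (hfub t)
  set c : ℕ → ℝ := fun t => gammaNH μ t * (ε'+2*Δ)
    + 2*gammaNH μ t * (∫ ω, ‖dd t ω - g t ω‖ ∂P) + L * gammaNH μ t^2 with hcdef
  -- one-step recursion in expectation
  have hGrec : ∀ t, G (t+1) ≤ (1 - 6/((t:ℝ)+2)) * G t + c t := by
    intro t
    have has : ∀ᵐ ω ∂P, fstar - f (θ (t+1) ω)
        ≤ (1 - 6/((t:ℝ)+2)) * (fstar - f (θ t ω)) + gammaNH μ t * (ε'+2*Δ)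
          + 2*gammaNH μ t * ‖dd t ω - g t ω‖ + L * gammaNH μ t^2 := by
      filter_upwards [hstep t] with ω h
      obtain ⟨hdne, hupd, hbias⟩ := h
      have hps := pointwise_step hL hμ hε' hΔ f hf hLip fstar hdom t
        (θ t ω) (dd t ω) (g t ω) hdne hbias
      rw [← hupd] at hps
      linarith
    have i1 : Integrable (fun ω => (1 - 6/((t:ℝ)+2)) * (fstar - f (θ t ω))) P :=
      ((integrable_const _).sub (hfint t)).const_mul _
    have i2 : Integrable (fun ω => (1 - 6/((t:ℝ)+2)) * (fstar - f (θ t ω))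
        + gammaNH μ t * (ε'+2*Δ)) P := i1.add (integrable_const _)
    have i3 : Integrable (fun ω => 2*gammaNH μ t * ‖dd t ω - g t ω‖) P :=
      (hXint t).const_mul _
    have hlhs : Integrable (fun ω => fstar - f (θ (t+1) ω)) P :=
      (integrable_const _).sub (hfint (t+1))
    have i123 : Integrable (fun ω => (1 - 6/((t:ℝ)+2)) * (fstar - f (θ t ω))
        + gammaNH μ t * (ε'+2*Δ) + 2*gammaNH μ t * ‖dd t ω - g t ω‖) P := i2.add i3
    have i1234 : Integrable (fun ω => (1 - 6/((t:ℝ)+2)) * (fstar - f (θ t ω))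
        + gammaNH μ t * (ε'+2*Δ) + 2*gammaNH μ t * ‖dd t ω - g t ω‖
        + L * gammaNH μ t ^ 2) P := i123.add (integrable_const _)
    have hmono := integral_mono_ae hlhs i1234 has
    simp only [integral_add i123 (integrable_const _), integral_add i2 i3,
      integral_add i1 (integrable_const _), integral_const_mul,
      integral_sub (integrable_const _) (hfint t),
      integral_sub (integrable_const _) (hfint (t+1)),
      integral_const] at hmono
    simp only [probReal_univ, measure_univ, ENNReal.toReal_one, one_smul, smul_eq_mul] at hmono
    simp only [hGdef, hcdef]
    linarith
  -- telescoping
  have hsum := weighted_rec G c hGnn hGrec T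
  -- bound each summand
  set S : ℝ := 6*(ε'+2*Δ)*((T:ℝ)+1)^2/Real.sqrt μ
      + 12*(3*σ+6*Real.sqrt K/Real.sqrt μ)*(((T:ℝ)+1)*Real.sqrt ((T:ℝ)+1))/Real.sqrt μ
      + 12*Real.sqrt K'*(((T:ℝ)+1)^2*Real.sqrt ((T:ℝ)+1))/Real.sqrt μ
      + 18*L*((T:ℝ)+1)/μ with hSdef
  have hcb : ∀ t ∈ Finset.range T, ((t:ℝ)+2)^3 * c t ≤ S := by
    intro t ht'
    have h1 : t < T := Finset.mem_range.mp ht'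
    have hWnn : (0:ℝ) ≤ ∫ ω, ‖dd t ω - g t ω‖ ∂P :=
      integral_nonneg fun ω => norm_nonneg _
    exact summand_bound μ L ε' Δ σ K K' hμ hL hε' hΔ hσ hK hK' t T h1
      (∫ ω, ‖dd t ω - g t ω‖ ∂P) hWnn (le_trans (hWle t) (hsqrtV t))
  have hSnn : 0 ≤ S := by
    rw [hSdef]
    have h1 : (0:ℝ) < Real.sqrt μ := Real.sqrt_pos.mpr hμ
    positivity
  have hsum2 : ∑ t ∈ Finset.range T, ((t:ℝ)+2)^3 * c t ≤ ((T:ℝ)+1) * S := by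
    calc ∑ t ∈ Finset.range T, ((t:ℝ)+2)^3 * c t ≤ ∑ _t ∈ Finset.range T, S :=
          Finset.sum_le_sum hcb
      _ = (T:ℝ) * S := by rw [Finset.sum_const, Finset.card_range, nsmul_eq_mul]
      _ ≤ ((T:ℝ)+1) * S := by nlinarith [Nat.cast_nonneg (α := ℝ) T]
  have hy3 : (0:ℝ) < ((T:ℝ)+1)^3 := by positivity
  have hGT : G T ≤ G 0/((T:ℝ)+1)^3 + S/((T:ℝ)+1)^2 := by
    have h1 : ((T:ℝ)+1)^3 * G T ≤ G 0 + ((T:ℝ)+1)*S := le_trans hsum (by linarith)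
    have h2 : G T ≤ (G 0 + ((T:ℝ)+1)*S)/((T:ℝ)+1)^3 := by
      rw [le_div_iff₀ hy3]; linarith
    have h3 : (G 0 + ((T:ℝ)+1)*S)/((T:ℝ)+1)^3 = G 0/((T:ℝ)+1)^3 + S/((T:ℝ)+1)^2 := by
      field_simp
    linarith [h3 ▸ h2]
  -- final comparison
  have hy1 : (1:ℝ) ≤ (T:ℝ)+1 := by
    have : (1:ℝ) ≤ (T:ℝ) := by exact_mod_cast hT
    linarith
  have hy0 : (0:ℝ) ≤ (T:ℝ)+1 := by linarith
  have hss : Real.sqrt ((T:ℝ)+1) * Real.sqrt ((T:ℝ)+1) = (T:ℝ)+1 :=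
    Real.mul_self_sqrt hy0
  have hpp : Real.sqrt μ * Real.sqrt μ = μ := Real.mul_self_sqrt hμ.le
  have hs1 : (1:ℝ) ≤ Real.sqrt ((T:ℝ)+1) := by
    nlinarith [Real.sq_sqrt hy0, Real.sqrt_nonneg ((T:ℝ)+1), hy1]
  have key := final_arith L ε' Δ σ (G 0) (Real.sqrt μ) (Real.sqrt K) (Real.sqrt K')
    (Real.sqrt ((T:ℝ)+1)) hL hε' hΔ hσ (hGnn 0) (Real.sqrt_pos.mpr hμ)
    (Real.sqrt_nonneg K) (Real.sqrt_nonneg K') hs1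
  rw [hss, hpp] at key
  have hrpow : ((T:ℝ)+1) ^ ((1:ℝ)/2) = Real.sqrt ((T:ℝ)+1) := (Real.sqrt_eq_rpow _).symm
  rw [hrpow]
  calc fstar - ∫ ω, f (θ T ω) ∂P = G T := rfl
    _ ≤ G 0/((T:ℝ)+1)^3 + S/((T:ℝ)+1)^2 := hGT
    _ ≤ G 0/((T:ℝ)+1)^2 + 100*((σ/Real.sqrt μ + L/μ)/((T:ℝ)+1)
          + (σ/Real.sqrt μ + Real.sqrt K/μ)/Real.sqrt ((T:ℝ)+1)
          + (ε'+Δ)/Real.sqrt μ + Real.sqrt K'*Real.sqrt ((T:ℝ)+1)/Real.sqrt μ) := by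
        rw [hSdef]
        exact key
    _ = (fstar - ∫ ω, f (θ 0 ω) ∂P)/((T:ℝ)+1)^2 + 100*((σ/Real.sqrt μ + L/μ)/((T:ℝ)+1)
          + (σ/Real.sqrt μ + Real.sqrt K/μ)/Real.sqrt ((T:ℝ)+1)
          + (ε'+Δ)/Real.sqrt μ + Real.sqrt K'*Real.sqrt ((T:ℝ)+1)/Real.sqrt μ) := rfl
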